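/- Let G be a group with elements a_1, ..., a_{g-1}, u_1, ..., u_{g-1} satisfying the braid relations within each family, a_i u_j = u_j a_i for |i-j|>1, a_i u_{i+1} u_i = u_{i+1} u_i a_{i+1}, a_{i+1} u_i u_{i+1} = u_i u_{i+1} a_i, a_1 u_1 a_1 = u_1, and u_2 a_1 a_2 u_1 = a_1 a_2. Set r = a_1 a_2 ⋯ a_{g-1} u_{g-1} ⋯ u_2 u_1 and let Δ_g be the fundamental element of the u_i's (Δ_1 = 1, Δ_m = (u_1 ⋯ u_{m-1}) Δ_{m-1}). Then r² = Δ_g². -/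
import Mathlib


variable {G : Type*} [Group G]

/-- `prodAsc f m = f 1 * f 2 * ⋯ * f m` (empty product for `m = 0`). -/
def prodAsc (f : ℕ → G) (m : ℕ) : G :=
  ((List.range m).map (fun i => f (i + 1))).prod

/-- `prodDesc f m = f m * ⋯ * f 2 * f 1` (empty product for `m = 0`). -/
def prodDesc (f : ℕ → G) (m : ℕ) : G :=
  (((List.range m).reverse).map (fun i => f (i + 1))).prod

/-- The fundamental braid element: `Δ 0 = Δ 1 = 1`, `Δ (m+1) = (u 1 ⋯ u m) * Δ m`. -/
def braidDelta (u : ℕ → G) : ℕ → G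
  | 0 => 1
  | m + 1 => prodAsc u m * braidDelta u m


lemma prodAsc_zero (f : ℕ → G) : prodAsc f 0 = 1 := rfl

lemma prodAsc_succ (f : ℕ → G) (m : ℕ) : prodAsc f (m + 1) = prodAsc f m * f (m + 1) := by
  simp [prodAsc, List.range_succ]

lemma prodDesc_zero (f : ℕ → G) : prodDesc f 0 = 1 := rfl

lemma prodDesc_succ (f : ℕ → G) (m : ℕ) : prodDesc f (m + 1) = f (m + 1) * prodDesc f m := by
  simp [prodDesc, List.range_succ]

lemma braidDelta_zero (u : ℕ → G) : braidDelta u 0 = 1 := rfl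

lemma braidDelta_succ (u : ℕ → G) (m : ℕ) :
    braidDelta u (m + 1) = prodAsc u m * braidDelta u m := rfl

lemma prodAsc_cons (f : ℕ → G) (m : ℕ) :
    prodAsc f (m + 1) = f 1 * prodAsc (fun i => f (i + 1)) m := by
  induction m with
  | zero => simp [prodAsc_succ, prodAsc_zero]
  | succ n ih =>
      rw [prodAsc_succ, ih, prodAsc_succ (fun i => f (i + 1)) n, mul_assoc]

lemma prodDesc_cons (f : ℕ → G) (m : ℕ) :
    prodDesc f (m + 1) = prodDesc (fun i => f (i + 1)) m * f 1 := by
  induction m with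
  | zero => simp [prodDesc_succ, prodDesc_zero]
  | succ n ih =>
      rw [prodDesc_succ, ih, prodDesc_succ (fun i => f (i + 1)) n, mul_assoc]

lemma prodAsc_add (f : ℕ → G) (k : ℕ) :
    ∀ d, prodAsc f (k + d) = prodAsc f k * prodAsc (fun i => f (k + i)) d := by
  intro d
  induction d with
  | zero => simp [prodAsc_zero]
  | succ n ih =>
      rw [show k + (n + 1) = (k + n) + 1 from rfl, prodAsc_succ, ih,
        prodAsc_succ (fun i => f (k + i)) n, mul_assoc]
      rfl

lemma prodAsc_inv (f : ℕ → G) : ∀ m, prodAsc (fun i => (f i)⁻¹) m = (prodDesc f m)⁻¹ := by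
  intro m
  induction m with
  | zero => simp [prodAsc_zero, prodDesc_zero]
  | succ n ih =>
      rw [prodAsc_succ, ih, prodDesc_succ]
      group

lemma commProdAsc (f : ℕ → G) (c : G) :
    ∀ m, (∀ i, 1 ≤ i → i ≤ m → c * f i = f i * c) → c * prodAsc f m = prodAsc f m * c := by
  intro m
  induction m with
  | zero => intro _; simp [prodAsc_zero]
  | succ n ih =>
      intro h
      rw [prodAsc_succ]
      calc c * (prodAsc f n * f (n + 1)) = (c * prodAsc f n) * f (n + 1) := by group
        _ = (prodAsc f n * c) * f (n + 1) := by rw [ih (fun i h1 h2 => h i h1 (by omega))]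
        _ = prodAsc f n * (c * f (n + 1)) := by group
        _ = prodAsc f n * (f (n + 1) * c) := by rw [h (n + 1) (by omega) (by omega)]
        _ = prodAsc f n * f (n + 1) * c := by group

lemma commProdDesc (f : ℕ → G) (c : G) :
    ∀ m, (∀ i, 1 ≤ i → i ≤ m → c * f i = f i * c) → c * prodDesc f m = prodDesc f m * c := by
  intro m
  induction m with
  | zero => intro _; simp [prodDesc_zero]
  | succ n ih =>
      intro h
      rw [prodDesc_succ]
      calc c * (f (n + 1) * prodDesc f n) = (c * f (n + 1)) * prodDesc f n := by group
        _ = (f (n + 1) * c) * prodDesc f n := by rw [h (n + 1) (by omega) (by omega)]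
        _ = f (n + 1) * (c * prodDesc f n) := by group
        _ = f (n + 1) * (prodDesc f n * c) := by rw [ih (fun i h1 h2 => h i h1 (by omega))]
        _ = f (n + 1) * prodDesc f n * c := by group

lemma mul_rot {p q X : G} (h : p * X * q = X) : p * X = X * q⁻¹ := by
  calc p * X = p * X * q * q⁻¹ := by group
    _ = X * q⁻¹ := by rw [h]

lemma inv_push {A B X : G} (h : A * X = X * B) : A⁻¹ * X = X * B⁻¹ := by
  calc A⁻¹ * X = A⁻¹ * (X * B) * B⁻¹ := by group
    _ = A⁻¹ * (A * X) * B⁻¹ := by rw [h]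
    _ = X * B⁻¹ := by group

lemma inv_push' {X c b : G} (h : X * c = b * X) : X * c⁻¹ = b⁻¹ * X := by
  calc X * c⁻¹ = b⁻¹ * (b * X) * c⁻¹ := by group
    _ = b⁻¹ * (X * c) * c⁻¹ := by rw [h]
    _ = b⁻¹ * X := by group

section Main

variable (g : ℕ) (a u : ℕ → G)

/-- `u k` commutes with `Δ m` when `m + 1 ≤ k`. -/
lemma commDeltaU (hu1 : ∀ i j, 1 ≤ i → i + 2 ≤ j → j ≤ g - 1 → u i * u j = u j * u i) :
    ∀ m k, m + 1 ≤ k → 1 ≤ k → k ≤ g - 1 →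
      u k * braidDelta u m = braidDelta u m * u k := by
  intro m
  induction m with
  | zero => intro k _ _ _; simp [braidDelta_zero]
  | succ n ih =>
      intro k hk h1 h2
      rw [braidDelta_succ]
      have hA : u k * prodAsc u n = prodAsc u n * u k := by
        refine commProdAsc u (u k) n (fun i hi1 hi2 => ?_)
        exact (hu1 i k hi1 (by omega) h2).symm
      calc u k * (prodAsc u n * braidDelta u n) = (u k * prodAsc u n) * braidDelta u n := by group
        _ = (prodAsc u n * u k) * braidDelta u n := by rw [hA]
        _ = prodAsc u n * (u k * braidDelta u n) := by group
        _ = prodAsc u n * (braidDelta u n * u k) := by rw [ih k (by omega) h1 h2]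
        _ = prodAsc u n * braidDelta u n * u k := by group

/-- L1: `Δ (m+1) = Δ m * (u m ⋯ u 1)`. -/
lemma delta_rev (hu1 : ∀ i j, 1 ≤ i → i + 2 ≤ j → j ≤ g - 1 → u i * u j = u j * u i) :
    ∀ m, m ≤ g - 1 → braidDelta u (m + 1) = braidDelta u m * prodDesc u m := by
  intro m
  induction m with
  | zero => simp [braidDelta_succ, braidDelta_zero, prodAsc_zero, prodDesc_zero]
  | succ n ih =>
      intro h
      calc braidDelta u (n + 2) = prodAsc u (n + 1) * braidDelta u (n + 1) := rfl
        _ = (prodAsc u n * u (n + 1)) * (braidDelta u n * prodDesc u n) := by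
            rw [prodAsc_succ, ih (by omega)]
        _ = prodAsc u n * (u (n + 1) * braidDelta u n) * prodDesc u n := by group
        _ = prodAsc u n * (braidDelta u n * u (n + 1)) * prodDesc u n := by
            rw [commDeltaU g u hu1 n (n + 1) (by omega) (by omega) h]
        _ = (prodAsc u n * braidDelta u n) * (u (n + 1) * prodDesc u n) := by group
        _ = braidDelta u (n + 1) * prodDesc u (n + 1) := by
            rw [← braidDelta_succ, ← prodDesc_succ]

/-- shift: `(u 1 ⋯ u m) u i = u (i+1) (u 1 ⋯ u m)` for `i + 1 ≤ m`. -/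
lemma ascShift (hu1 : ∀ i j, 1 ≤ i → i + 2 ≤ j → j ≤ g - 1 → u i * u j = u j * u i)
    (hu2 : ∀ i, 1 ≤ i → i + 1 ≤ g - 1 → u i * u (i + 1) * u i = u (i + 1) * u i * u (i + 1)) :
    ∀ m i, 1 ≤ i → i + 1 ≤ m → m ≤ g - 1 →
      prodAsc u m * u i = u (i + 1) * prodAsc u m := by
  intro m
  induction m with
  | zero => intro i _ h _; omega
  | succ n ih =>
      intro i hi1 hi2 hn
      rcases Nat.lt_or_ge i n with hlt | hge
      · -- i + 1 ≤ n, use commutation of u (n+1) with u i then ih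
        rw [prodAsc_succ]
        calc prodAsc u n * u (n + 1) * u i = prodAsc u n * (u (n + 1) * u i) := by group
          _ = prodAsc u n * (u i * u (n + 1)) := by rw [← hu1 i (n + 1) hi1 (by omega) hn]
          _ = (prodAsc u n * u i) * u (n + 1) := by group
          _ = (u (i + 1) * prodAsc u n) * u (n + 1) := by rw [ih i hi1 (by omega) (by omega)]
          _ = u (i + 1) * (prodAsc u n * u (n + 1)) := by group
      · -- i = n
        have hin : i = n := by omega
        subst hin
        obtain ⟨n', rfl⟩ : ∃ n', i = n' + 1 := ⟨i - 1, by omega⟩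
        -- m = n'+2, prodAsc u (n'+2) = prodAsc u n' * u (n'+1) * u (n'+2)
        have hcomm : u (n' + 2) * prodAsc u n' = prodAsc u n' * u (n' + 2) := by
          refine commProdAsc u (u (n' + 2)) n' (fun j hj1 hj2 => ?_)
          exact (hu1 j (n' + 2) hj1 (by omega) (by omega)).symm
        rw [prodAsc_succ, prodAsc_succ]
        calc prodAsc u n' * u (n' + 1) * u (n' + 2) * u (n' + 1)
            = prodAsc u n' * (u (n' + 1) * u (n' + 2) * u (n' + 1)) := by group
          _ = prodAsc u n' * (u (n' + 2) * u (n' + 1) * u (n' + 2)) := by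
              rw [hu2 (n' + 1) (by omega) (by omega)]
          _ = (prodAsc u n' * u (n' + 2)) * (u (n' + 1) * u (n' + 2)) := by group
          _ = (u (n' + 2) * prodAsc u n') * (u (n' + 1) * u (n' + 2)) := by rw [hcomm]
          _ = u (n' + 2) * (prodAsc u n' * u (n' + 1) * u (n' + 2)) := by group

/-- pull `prodAsc u M` through a descending product, shifting indices up. -/
lemma pullDesc (hu1 : ∀ i j, 1 ≤ i → i + 2 ≤ j → j ≤ g - 1 → u i * u j = u j * u i)
    (hu2 : ∀ i, 1 ≤ i → i + 1 ≤ g - 1 → u i * u (i + 1) * u i = u (i + 1) * u i * u (i + 1)) :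
    ∀ M m, m < M → M ≤ g - 1 →
      prodAsc u M * prodDesc u m = prodDesc (fun i => u (i + 1)) m * prodAsc u M := by
  intro M m
  induction m with
  | zero => intro _ _; simp [prodDesc_zero]
  | succ n ih =>
      intro h1 h2
      rw [prodDesc_succ]
      calc prodAsc u M * (u (n + 1) * prodDesc u n)
          = (prodAsc u M * u (n + 1)) * prodDesc u n := by group
        _ = (u (n + 2) * prodAsc u M) * prodDesc u n := by
            rw [ascShift g u hu1 hu2 M (n + 1) (by omega) (by omega) h2]
        _ = u (n + 2) * (prodAsc u M * prodDesc u n) := by group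
        _ = u (n + 2) * (prodDesc (fun i => u (i + 1)) n * prodAsc u M) := by
            rw [ih (by omega) h2]
        _ = prodDesc (fun i => u (i + 1)) (n + 1) * prodAsc u M := by
            rw [prodDesc_succ (fun i => u (i + 1)) n]; group

/-- L2: `Δ (m+1) = (u m ⋯ u 1) * Δ' m` with shifted generators. -/
lemma deltaFact (hu1 : ∀ i j, 1 ≤ i → i + 2 ≤ j → j ≤ g - 1 → u i * u j = u j * u i)
    (hu2 : ∀ i, 1 ≤ i → i + 1 ≤ g - 1 → u i * u (i + 1) * u i = u (i + 1) * u i * u (i + 1)) :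
    ∀ m, m ≤ g - 1 →
      braidDelta u (m + 1) = prodDesc u m * braidDelta (fun i => u (i + 1)) m := by
  intro m
  induction m with
  | zero => simp [braidDelta_succ, braidDelta_zero, prodAsc_zero, prodDesc_zero]
  | succ n ih =>
      intro h
      rw [braidDelta_succ, ih (by omega)]
      calc prodAsc u (n + 1) * (prodDesc u n * braidDelta (fun i => u (i + 1)) n)
          = (prodAsc u (n + 1) * prodDesc u n) * braidDelta (fun i => u (i + 1)) n := by group
        _ = (prodDesc (fun i => u (i + 1)) n * prodAsc u (n + 1)) *
              braidDelta (fun i => u (i + 1)) n := by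
            rw [pullDesc g u hu1 hu2 (n + 1) n (by omega) h]
        _ = prodDesc (fun i => u (i + 1)) n *
              ((u 1 * prodAsc (fun i => u (i + 1)) n) * braidDelta (fun i => u (i + 1)) n) := by
            rw [← prodAsc_cons u n]; group
        _ = (prodDesc (fun i => u (i + 1)) n * u 1) * braidDelta (fun i => u (i + 1)) (n + 1) := by
            rw [braidDelta_succ (fun i => u (i + 1)) n]; group
        _ = prodDesc u (n + 1) * braidDelta (fun i => u (i + 1)) (n + 1) := by
            rw [← prodDesc_cons u n]

/-- Δ with inverted generators is the inverse of Δ. -/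
lemma invDelta (hu1 : ∀ i j, 1 ≤ i → i + 2 ≤ j → j ≤ g - 1 → u i * u j = u j * u i) :
    ∀ m, m ≤ g → braidDelta (fun i => (u i)⁻¹) m = (braidDelta u m)⁻¹ := by
  intro m
  induction m with
  | zero => simp [braidDelta_zero]
  | succ n ih =>
      intro h
      rw [braidDelta_succ, ih (by omega), prodAsc_inv u n,
        delta_rev g u hu1 n (by omega)]
      group

end Main

section Main2

variable (g : ℕ) (a u : ℕ → G)

/-- `(u 1 ⋯ u m) a k = a (k+1) (u 1 ⋯ u m)` for `k + 1 ≤ m`. -/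
lemma conjAU
    (hC1 : ∀ i j, 1 ≤ i → i ≤ g - 1 → 1 ≤ j → j ≤ g - 1 → (i + 2 ≤ j ∨ j + 2 ≤ i) →
      a i * u j = u j * a i)
    (hC3 : ∀ i, 1 ≤ i → i ≤ g - 2 → a (i + 1) * u i * u (i + 1) = u i * u (i + 1) * a i) :
    ∀ k m, 1 ≤ k → k + 1 ≤ m → m ≤ g - 1 →
      prodAsc u m * a k = a (k + 1) * prodAsc u m := by
  intro k m hk hkm hm
  obtain ⟨k', rfl⟩ : ∃ k', k = k' + 1 := ⟨k - 1, by omega⟩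
  obtain ⟨d, hd⟩ : ∃ d, m = (k' + 2) + d := ⟨m - (k' + 2), by omega⟩
  subst hd
  have hsplit : prodAsc u (k' + 2 + d)
      = prodAsc u k' * u (k' + 1) * u (k' + 2) * prodAsc (fun i => u (k' + 2 + i)) d := by
    rw [prodAsc_add u (k' + 2) d, prodAsc_succ, prodAsc_succ]
  have hS : prodAsc (fun i => u (k' + 2 + i)) d * a (k' + 1)
      = a (k' + 1) * prodAsc (fun i => u (k' + 2 + i)) d := by
    refine (commProdAsc _ (a (k' + 1)) d (fun i hi1 hi2 => ?_)).symm
    exact hC1 (k' + 1) (k' + 2 + i) (by omega) (by omega) (by omega) (by omega) (by omega)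
  have hP : a (k' + 2) * prodAsc u k' = prodAsc u k' * a (k' + 2) := by
    refine commProdAsc u (a (k' + 2)) k' (fun i hi1 hi2 => ?_)
    exact hC1 (k' + 2) i (by omega) (by omega) (by omega) (by omega) (by omega)
  have h3 : u (k' + 1) * u (k' + 2) * a (k' + 1)
      = a (k' + 2) * u (k' + 1) * u (k' + 2) := by
    rw [hC3 (k' + 1) (by omega) (by omega)]
  rw [hsplit]
  calc prodAsc u k' * u (k' + 1) * u (k' + 2) * prodAsc (fun i => u (k' + 2 + i)) d * a (k' + 1)
      = prodAsc u k' * (u (k' + 1) * u (k' + 2)) *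
          (prodAsc (fun i => u (k' + 2 + i)) d * a (k' + 1)) := by group
    _ = prodAsc u k' * (u (k' + 1) * u (k' + 2)) *
          (a (k' + 1) * prodAsc (fun i => u (k' + 2 + i)) d) := by rw [hS]
    _ = prodAsc u k' * (u (k' + 1) * u (k' + 2) * a (k' + 1)) *
          prodAsc (fun i => u (k' + 2 + i)) d := by group
    _ = prodAsc u k' * (a (k' + 2) * u (k' + 1) * u (k' + 2)) *
          prodAsc (fun i => u (k' + 2 + i)) d := by rw [h3]
    _ = (prodAsc u k' * a (k' + 2)) * (u (k' + 1) * u (k' + 2) *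
          prodAsc (fun i => u (k' + 2 + i)) d) := by group
    _ = (a (k' + 2) * prodAsc u k') * (u (k' + 1) * u (k' + 2) *
          prodAsc (fun i => u (k' + 2 + i)) d) := by rw [hP]
    _ = a (k' + 2) * (prodAsc u k' * u (k' + 1) * u (k' + 2) *
          prodAsc (fun i => u (k' + 2 + i)) d) := by group

/-- `(u m ⋯ u 1) a m = a (m-1) (u m ⋯ u 1)` for `2 ≤ m`. -/
lemma conjDU
    (hC1 : ∀ i j, 1 ≤ i → i ≤ g - 1 → 1 ≤ j → j ≤ g - 1 → (i + 2 ≤ j ∨ j + 2 ≤ i) →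
      a i * u j = u j * a i)
    (hC2 : ∀ i, 1 ≤ i → i ≤ g - 2 → a i * u (i + 1) * u i = u (i + 1) * u i * a (i + 1)) :
    ∀ m, 2 ≤ m → m ≤ g - 1 →
      prodDesc u m * a m = a (m - 1) * prodDesc u m := by
  intro m h2 hm
  obtain ⟨n, rfl⟩ : ∃ n, m = n + 2 := ⟨m - 2, by omega⟩
  have hD : prodDesc u n * a (n + 2) = a (n + 2) * prodDesc u n := by
    refine (commProdDesc u (a (n + 2)) n (fun i hi1 hi2 => ?_)).symm
    exact hC1 (n + 2) i (by omega) (by omega) (by omega) (by omega) (by omega)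
  have h2' : u (n + 2) * u (n + 1) * a (n + 2) = a (n + 1) * u (n + 2) * u (n + 1) := by
    rw [hC2 (n + 1) (by omega) (by omega)]
  have hshape : prodDesc u (n + 2) = u (n + 2) * u (n + 1) * prodDesc u n := by
    rw [prodDesc_succ, prodDesc_succ]; group
  rw [hshape, show n + 2 - 1 = n + 1 from rfl]
  calc u (n + 2) * u (n + 1) * prodDesc u n * a (n + 2)
      = u (n + 2) * u (n + 1) * (prodDesc u n * a (n + 2)) := by group
    _ = u (n + 2) * u (n + 1) * (a (n + 2) * prodDesc u n) := by rw [hD]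
    _ = (u (n + 2) * u (n + 1) * a (n + 2)) * prodDesc u n := by group
    _ = (a (n + 1) * u (n + 2) * u (n + 1)) * prodDesc u n := by rw [h2']
    _ = a (n + 1) * (u (n + 2) * u (n + 1) * prodDesc u n) := by group

/-- J: `Δ m * a j = (a (m-j))⁻¹ * Δ m` for `1 ≤ j ≤ m - 1 ≤ g - 1`. -/
lemma deltaJ
    (hu1 : ∀ i j, 1 ≤ i → i + 2 ≤ j → j ≤ g - 1 → u i * u j = u j * u i)
    (hC1 : ∀ i j, 1 ≤ i → i ≤ g - 1 → 1 ≤ j → j ≤ g - 1 → (i + 2 ≤ j ∨ j + 2 ≤ i) →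
      a i * u j = u j * a i)
    (hC2 : ∀ i, 1 ≤ i → i ≤ g - 2 → a i * u (i + 1) * u i = u (i + 1) * u i * a (i + 1))
    (hC3 : ∀ i, 1 ≤ i → i ≤ g - 2 → a (i + 1) * u i * u (i + 1) = u i * u (i + 1) * a i)
    (hC4 : a 1 * u 1 * a 1 = u 1) :
    ∀ m, 2 ≤ m → m ≤ g → ∀ j, 1 ≤ j → j + 1 ≤ m →
      braidDelta u m * a j = (a (m - j))⁻¹ * braidDelta u m := by
  intro m hm2
  induction m, hm2 using Nat.le_induction with
  | base =>
      intro _ j hj1 hj2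
      have hj : j = 1 := by omega
      subst hj
      have hD2 : braidDelta u 2 = u 1 := by
        simp [braidDelta_succ, braidDelta_zero, prodAsc_succ, prodAsc_zero]
      rw [hD2, show (2 : ℕ) - 1 = 1 from rfl]
      calc u 1 * a 1 = (a 1)⁻¹ * (a 1 * u 1 * a 1) := by group
        _ = (a 1)⁻¹ * u 1 := by rw [hC4]
  | succ m hm2 ih =>
      intro hmg j hj1 hj2
      by_cases hcase : j + 1 ≤ m
      · -- ascending route
        have hih := ih (by omega) j hj1 hcase
        have hconj : prodAsc u m * (a (m - j))⁻¹ = (a (m - j + 1))⁻¹ * prodAsc u m :=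
          inv_push' (conjAU g a u hC1 hC3 (m - j) m (by omega) (by omega) (by omega))
        calc braidDelta u (m + 1) * a j = prodAsc u m * (braidDelta u m * a j) := by
              rw [braidDelta_succ]; group
          _ = prodAsc u m * ((a (m - j))⁻¹ * braidDelta u m) := by rw [hih]
          _ = (prodAsc u m * (a (m - j))⁻¹) * braidDelta u m := by group
          _ = ((a (m - j + 1))⁻¹ * prodAsc u m) * braidDelta u m := by rw [hconj]
          _ = (a (m + 1 - j))⁻¹ * braidDelta u (m + 1) := by
              rw [braidDelta_succ, show m - j + 1 = m + 1 - j from by omega]; group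
      · -- top route, j = m
        have hjm : j = m := by omega
        subst hjm
        calc braidDelta u (j + 1) * a j
            = braidDelta u j * prodDesc u j * a j := by rw [delta_rev g u hu1 j (by omega)]
          _ = braidDelta u j * (a (j - 1) * prodDesc u j) := by
              rw [mul_assoc, conjDU g a u hC1 hC2 j (by omega) (by omega)]
          _ = (braidDelta u j * a (j - 1)) * prodDesc u j := by group
          _ = ((a (j - (j - 1)))⁻¹ * braidDelta u j) * prodDesc u j := by
              rw [ih (by omega) (j - 1) (by omega) (by omega)]
          _ = (a (j + 1 - j))⁻¹ * braidDelta u (j + 1) := by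
              rw [delta_rev g u hu1 j (by omega),
                show j - (j - 1) = j + 1 - j from by omega]
              group

end Main2

section Main3

variable (g : ℕ) (a u : ℕ → G)

/-- E1 pushing: `Δ g * (a 1 ⋯ a m) = (a (k+1) ⋯ a (k+m))⁻¹ * Δ g` when `k + m = g - 1`. -/
lemma deltaConjX
    (hu1 : ∀ i j, 1 ≤ i → i + 2 ≤ j → j ≤ g - 1 → u i * u j = u j * u i)
    (hC1 : ∀ i j, 1 ≤ i → i ≤ g - 1 → 1 ≤ j → j ≤ g - 1 → (i + 2 ≤ j ∨ j + 2 ≤ i) →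
      a i * u j = u j * a i)
    (hC2 : ∀ i, 1 ≤ i → i ≤ g - 2 → a i * u (i + 1) * u i = u (i + 1) * u i * a (i + 1))
    (hC3 : ∀ i, 1 ≤ i → i ≤ g - 2 → a (i + 1) * u i * u (i + 1) = u i * u (i + 1) * a i)
    (hC4 : a 1 * u 1 * a 1 = u 1) :
    ∀ m k, k + m = g - 1 →
      braidDelta u g * prodAsc a m = (prodAsc (fun i => a (k + i)) m)⁻¹ * braidDelta u g := by
  intro m
  induction m with
  | zero => intro k _; simp [prodAsc_zero]
  | succ n ih =>
      intro k hk
      have hih := ih (k + 1) (by omega)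
      have hJ : braidDelta u g * a (n + 1) = (a (k + 1))⁻¹ * braidDelta u g := by
        have := deltaJ g a u hu1 hC1 hC2 hC3 hC4 g (by omega) (by omega) (n + 1)
          (by omega) (by omega)
        rw [show g - (n + 1) = k + 1 from by omega] at this
        exact this
      have hcons : prodAsc (fun i => a (k + i)) (n + 1)
          = a (k + 1) * prodAsc (fun i => a (k + 1 + i)) n := by
        rw [prodAsc_cons (fun i => a (k + i)) n]
        have : (fun i => a (k + (i + 1))) = (fun i => a (k + 1 + i)) := by
          funext i; congr 1; omega
        rw [this]
      calc braidDelta u g * prodAsc a (n + 1)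
          = (braidDelta u g * prodAsc a n) * a (n + 1) := by rw [prodAsc_succ]; group
        _ = ((prodAsc (fun i => a (k + 1 + i)) n)⁻¹ * braidDelta u g) * a (n + 1) := by
            rw [hih]
        _ = (prodAsc (fun i => a (k + 1 + i)) n)⁻¹ * (braidDelta u g * a (n + 1)) := by group
        _ = (prodAsc (fun i => a (k + 1 + i)) n)⁻¹ * ((a (k + 1))⁻¹ * braidDelta u g) := by
            rw [hJ]
        _ = (a (k + 1) * prodAsc (fun i => a (k + 1 + i)) n)⁻¹ * braidDelta u g := by group
        _ = (prodAsc (fun i => a (k + i)) (n + 1))⁻¹ * braidDelta u g := by rw [hcons]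

/-- E1: `x Δ_g x = Δ_g`. -/
lemma relE1
    (hu1 : ∀ i j, 1 ≤ i → i + 2 ≤ j → j ≤ g - 1 → u i * u j = u j * u i)
    (hC1 : ∀ i j, 1 ≤ i → i ≤ g - 1 → 1 ≤ j → j ≤ g - 1 → (i + 2 ≤ j ∨ j + 2 ≤ i) →
      a i * u j = u j * a i)
    (hC2 : ∀ i, 1 ≤ i → i ≤ g - 2 → a i * u (i + 1) * u i = u (i + 1) * u i * a (i + 1))
    (hC3 : ∀ i, 1 ≤ i → i ≤ g - 2 → a (i + 1) * u i * u (i + 1) = u i * u (i + 1) * a i)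
    (hC4 : a 1 * u 1 * a 1 = u 1) :
    prodAsc a (g - 1) * braidDelta u g * prodAsc a (g - 1) = braidDelta u g := by
  have h := deltaConjX g a u hu1 hC1 hC2 hC3 hC4 (g - 1) 0 (by omega)
  have he : (fun i => a (0 + i)) = a := by funext i; congr 1; omega
  rw [he] at h
  calc prodAsc a (g - 1) * braidDelta u g * prodAsc a (g - 1)
      = prodAsc a (g - 1) * (braidDelta u g * prodAsc a (g - 1)) := by group
    _ = prodAsc a (g - 1) * ((prodAsc a (g - 1))⁻¹ * braidDelta u g) := by rw [h]
    _ = braidDelta u g := by group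

/-- generalized C5: `u (j+1) a j a (j+1) u j = a j a (j+1)`. -/
lemma C5gen
    (hu1 : ∀ i j, 1 ≤ i → i + 2 ≤ j → j ≤ g - 1 → u i * u j = u j * u i)
    (hu2 : ∀ i, 1 ≤ i → i + 1 ≤ g - 1 → u i * u (i + 1) * u i = u (i + 1) * u i * u (i + 1))
    (hC1 : ∀ i j, 1 ≤ i → i ≤ g - 1 → 1 ≤ j → j ≤ g - 1 → (i + 2 ≤ j ∨ j + 2 ≤ i) →
      a i * u j = u j * a i)
    (hC3 : ∀ i, 1 ≤ i → i ≤ g - 2 → a (i + 1) * u i * u (i + 1) = u i * u (i + 1) * a i)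
    (hC5 : u 2 * a 1 * a 2 * u 1 = a 1 * a 2) :
    ∀ j, 1 ≤ j → j + 1 ≤ g - 1 →
      u (j + 1) * a j * a (j + 1) * u j = a j * a (j + 1) := by
  intro j hj
  induction j, hj using Nat.le_induction with
  | base => intro _; exact hC5
  | succ j hj ih =>
      intro hb
      have ihh := ih (by omega)
      -- conjugator c = u j * u (j+1) * u (j+2)
      set c := u j * u (j + 1) * u (j + 2) with hc
      have e1 : c * u j = u (j + 1) * c := by
        calc c * u j = u j * u (j + 1) * (u (j + 2) * u j) := by rw [hc]; group
          _ = u j * u (j + 1) * (u j * u (j + 2)) := by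
              rw [← hu1 j (j + 2) (by omega) (by omega) (by omega)]
          _ = (u j * u (j + 1) * u j) * u (j + 2) := by group
          _ = (u (j + 1) * u j * u (j + 1)) * u (j + 2) := by
              rw [hu2 j (by omega) (by omega)]
          _ = u (j + 1) * c := by rw [hc]; group
      have e2 : c * u (j + 1) = u (j + 2) * c := by
        calc c * u (j + 1) = u j * (u (j + 1) * u (j + 2) * u (j + 1)) := by rw [hc]; group
          _ = u j * (u (j + 2) * u (j + 1) * u (j + 2)) := by
              rw [hu2 (j + 1) (by omega) (by omega)]
          _ = (u j * u (j + 2)) * (u (j + 1) * u (j + 2)) := by group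
          _ = (u (j + 2) * u j) * (u (j + 1) * u (j + 2)) := by
              rw [hu1 j (j + 2) (by omega) (by omega) (by omega)]
          _ = u (j + 2) * c := by rw [hc]; group
      have e3 : c * a j = a (j + 1) * c := by
        calc c * a j = u j * u (j + 1) * (u (j + 2) * a j) := by rw [hc]; group
          _ = u j * u (j + 1) * (a j * u (j + 2)) := by
              rw [← hC1 j (j + 2) (by omega) (by omega) (by omega) (by omega) (by omega)]
          _ = (u j * u (j + 1) * a j) * u (j + 2) := by group
          _ = (a (j + 1) * u j * u (j + 1)) * u (j + 2) := by
              rw [hC3 j (by omega) (by omega)]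
          _ = a (j + 1) * c := by rw [hc]; group
      have e4 : c * a (j + 1) = a (j + 2) * c := by
        calc c * a (j + 1) = u j * (u (j + 1) * u (j + 2) * a (j + 1)) := by rw [hc]; group
          _ = u j * (a (j + 2) * u (j + 1) * u (j + 2)) := by
              rw [← hC3 (j + 1) (by omega) (by omega)]
          _ = (u j * a (j + 2)) * (u (j + 1) * u (j + 2)) := by group
          _ = (a (j + 2) * u j) * (u (j + 1) * u (j + 2)) := by
              rw [hC1 (j + 2) j (by omega) (by omega) (by omega) (by omega) (by omega)]
          _ = a (j + 2) * c := by rw [hc]; group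
      have key : (u (j + 2) * a (j + 1) * a (j + 2) * u (j + 1)) * c
          = (a (j + 1) * a (j + 2)) * c := by
        calc (u (j + 2) * a (j + 1) * a (j + 2) * u (j + 1)) * c
            = u (j + 2) * a (j + 1) * a (j + 2) * (u (j + 1) * c) := by group
          _ = u (j + 2) * a (j + 1) * a (j + 2) * (c * u j) := by rw [← e1]
          _ = u (j + 2) * a (j + 1) * (a (j + 2) * c) * u j := by group
          _ = u (j + 2) * a (j + 1) * (c * a (j + 1)) * u j := by rw [← e4]
          _ = u (j + 2) * (a (j + 1) * c) * (a (j + 1) * u j) := by group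
          _ = u (j + 2) * (c * a j) * (a (j + 1) * u j) := by rw [← e3]
          _ = (u (j + 2) * c) * (a j * a (j + 1) * u j) := by group
          _ = (c * u (j + 1)) * (a j * a (j + 1) * u j) := by rw [← e2]
          _ = c * (u (j + 1) * a j * a (j + 1) * u j) := by group
          _ = c * (a j * a (j + 1)) := by
              rw [show u (j + 1) * a j * a (j + 1) * u j = a j * a (j + 1) from ihh]
          _ = (c * a j) * a (j + 1) := by group
          _ = (a (j + 1) * c) * a (j + 1) := by rw [e3]
          _ = a (j + 1) * (c * a (j + 1)) := by group
          _ = a (j + 1) * (a (j + 2) * c) := by rw [e4]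
          _ = (a (j + 1) * a (j + 2)) * c := by group
      exact mul_right_cancel key

/-- W: `u (j+1) * x * u j = x` for `x = a 1 ⋯ a (g-1)`. -/
lemma relW
    (hu1 : ∀ i j, 1 ≤ i → i + 2 ≤ j → j ≤ g - 1 → u i * u j = u j * u i)
    (hu2 : ∀ i, 1 ≤ i → i + 1 ≤ g - 1 → u i * u (i + 1) * u i = u (i + 1) * u i * u (i + 1))
    (hC1 : ∀ i j, 1 ≤ i → i ≤ g - 1 → 1 ≤ j → j ≤ g - 1 → (i + 2 ≤ j ∨ j + 2 ≤ i) →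
      a i * u j = u j * a i)
    (hC3 : ∀ i, 1 ≤ i → i ≤ g - 2 → a (i + 1) * u i * u (i + 1) = u i * u (i + 1) * a i)
    (hC5 : u 2 * a 1 * a 2 * u 1 = a 1 * a 2) :
    ∀ j, 1 ≤ j → j + 1 ≤ g - 1 →
      u (j + 1) * prodAsc a (g - 1) * u j = prodAsc a (g - 1) := by
  intro j hj1 hj2
  obtain ⟨j', rfl⟩ : ∃ j', j = j' + 1 := ⟨j - 1, by omega⟩
  obtain ⟨d, hd⟩ : ∃ d, g - 1 = (j' + 2) + d := ⟨g - 1 - (j' + 2), by omega⟩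
  have hsplit : prodAsc a (g - 1)
      = prodAsc a j' * a (j' + 1) * a (j' + 2) * prodAsc (fun i => a (j' + 2 + i)) d := by
    rw [hd, prodAsc_add a (j' + 2) d, prodAsc_succ, prodAsc_succ]
  have hpre : u (j' + 2) * prodAsc a j' = prodAsc a j' * u (j' + 2) := by
    refine commProdAsc a (u (j' + 2)) j' (fun i hi1 hi2 => ?_)
    exact (hC1 i (j' + 2) (by omega) (by omega) (by omega) (by omega) (by omega)).symm
  have hS : prodAsc (fun i => a (j' + 2 + i)) d * u (j' + 1)
      = u (j' + 1) * prodAsc (fun i => a (j' + 2 + i)) d := by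
    refine (commProdAsc _ (u (j' + 1)) d (fun i hi1 hi2 => ?_)).symm
    exact (hC1 (j' + 2 + i) (j' + 1) (by omega) (by omega) (by omega) (by omega)
      (by omega)).symm
  have hC5' : u (j' + 2) * a (j' + 1) * a (j' + 2) * u (j' + 1)
      = a (j' + 1) * a (j' + 2) :=
    C5gen g a u hu1 hu2 hC1 hC3 hC5 (j' + 1) (by omega) (by omega)
  rw [hsplit]
  calc u (j' + 2) * (prodAsc a j' * a (j' + 1) * a (j' + 2) *
          prodAsc (fun i => a (j' + 2 + i)) d) * u (j' + 1)
      = (u (j' + 2) * prodAsc a j') * (a (j' + 1) * a (j' + 2)) *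
          (prodAsc (fun i => a (j' + 2 + i)) d * u (j' + 1)) := by group
    _ = (prodAsc a j' * u (j' + 2)) * (a (j' + 1) * a (j' + 2)) *
          (u (j' + 1) * prodAsc (fun i => a (j' + 2 + i)) d) := by rw [hpre, hS]
    _ = prodAsc a j' * (u (j' + 2) * a (j' + 1) * a (j' + 2) * u (j' + 1)) *
          prodAsc (fun i => a (j' + 2 + i)) d := by group
    _ = prodAsc a j' * (a (j' + 1) * a (j' + 2)) *
          prodAsc (fun i => a (j' + 2 + i)) d := by rw [hC5']
    _ = prodAsc a j' * a (j' + 1) * a (j' + 2) *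
          prodAsc (fun i => a (j' + 2 + i)) d := by group

end Main3

section Main4

variable (g : ℕ) (a u : ℕ → G)

lemma pushAsc
    (hu1 : ∀ i j, 1 ≤ i → i + 2 ≤ j → j ≤ g - 1 → u i * u j = u j * u i)
    (hu2 : ∀ i, 1 ≤ i → i + 1 ≤ g - 1 → u i * u (i + 1) * u i = u (i + 1) * u i * u (i + 1))
    (hC1 : ∀ i j, 1 ≤ i → i ≤ g - 1 → 1 ≤ j → j ≤ g - 1 → (i + 2 ≤ j ∨ j + 2 ≤ i) →
      a i * u j = u j * a i)
    (hC3 : ∀ i, 1 ≤ i → i ≤ g - 2 → a (i + 1) * u i * u (i + 1) = u i * u (i + 1) * a i)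
    (hC5 : u 2 * a 1 * a 2 * u 1 = a 1 * a 2) :
    ∀ m, m ≤ g - 2 →
      prodAsc (fun i => u (i + 1)) m * prodAsc a (g - 1)
        = prodAsc a (g - 1) * prodAsc (fun i => (u i)⁻¹) m := by
  intro m
  induction m with
  | zero => intro _; simp [prodAsc_zero]
  | succ n ih =>
      intro h
      have hW : u (n + 2) * prodAsc a (g - 1) = prodAsc a (g - 1) * (u (n + 1))⁻¹ :=
        mul_rot (relW g a u hu1 hu2 hC1 hC3 hC5 (n + 1) (by omega) (by omega))
      rw [prodAsc_succ (fun i => u (i + 1)) n, prodAsc_succ (fun i => (u i)⁻¹) n]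
      calc prodAsc (fun i => u (i + 1)) n * u (n + 2) * prodAsc a (g - 1)
          = prodAsc (fun i => u (i + 1)) n * (u (n + 2) * prodAsc a (g - 1)) := by group
        _ = prodAsc (fun i => u (i + 1)) n * (prodAsc a (g - 1) * (u (n + 1))⁻¹) := by rw [hW]
        _ = (prodAsc (fun i => u (i + 1)) n * prodAsc a (g - 1)) * (u (n + 1))⁻¹ := by group
        _ = (prodAsc a (g - 1) * prodAsc (fun i => (u i)⁻¹) n) * (u (n + 1))⁻¹ := by
            rw [ih (by omega)]
        _ = prodAsc a (g - 1) * (prodAsc (fun i => (u i)⁻¹) n * (u (n + 1))⁻¹) := by group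

lemma pushDelta
    (hu1 : ∀ i j, 1 ≤ i → i + 2 ≤ j → j ≤ g - 1 → u i * u j = u j * u i)
    (hu2 : ∀ i, 1 ≤ i → i + 1 ≤ g - 1 → u i * u (i + 1) * u i = u (i + 1) * u i * u (i + 1))
    (hC1 : ∀ i j, 1 ≤ i → i ≤ g - 1 → 1 ≤ j → j ≤ g - 1 → (i + 2 ≤ j ∨ j + 2 ≤ i) →
      a i * u j = u j * a i)
    (hC3 : ∀ i, 1 ≤ i → i ≤ g - 2 → a (i + 1) * u i * u (i + 1) = u i * u (i + 1) * a i)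
    (hC5 : u 2 * a 1 * a 2 * u 1 = a 1 * a 2) :
    ∀ m, m ≤ g - 1 →
      braidDelta (fun i => u (i + 1)) m * prodAsc a (g - 1)
        = prodAsc a (g - 1) * braidDelta (fun i => (u i)⁻¹) m := by
  intro m
  induction m with
  | zero => intro _; simp [braidDelta_zero]
  | succ n ih =>
      intro h
      rw [braidDelta_succ (fun i => u (i + 1)) n, braidDelta_succ (fun i => (u i)⁻¹) n]
      calc prodAsc (fun i => u (i + 1)) n * braidDelta (fun i => u (i + 1)) n *
              prodAsc a (g - 1)
          = prodAsc (fun i => u (i + 1)) n *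
              (braidDelta (fun i => u (i + 1)) n * prodAsc a (g - 1)) := by group
        _ = prodAsc (fun i => u (i + 1)) n *
              (prodAsc a (g - 1) * braidDelta (fun i => (u i)⁻¹) n) := by rw [ih (by omega)]
        _ = (prodAsc (fun i => u (i + 1)) n * prodAsc a (g - 1)) *
              braidDelta (fun i => (u i)⁻¹) n := by group
        _ = (prodAsc a (g - 1) * prodAsc (fun i => (u i)⁻¹) n) *
              braidDelta (fun i => (u i)⁻¹) n := by
            rw [pushAsc g a u hu1 hu2 hC1 hC3 hC5 n (by omega)]
        _ = prodAsc a (g - 1) *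
              (prodAsc (fun i => (u i)⁻¹) n * braidDelta (fun i => (u i)⁻¹) n) := by group

end Main4


/-- relation (E2): r² = Δ_g² for r = a_1 ⋯ a_{g-1} u_{g-1} ⋯ u_1. -/
theorem rel_E2 (g : ℕ) (a u : ℕ → G)
    (ha1 : ∀ i j, 1 ≤ i → i + 2 ≤ j → j ≤ g - 1 → a i * a j = a j * a i)
    (ha2 : ∀ i, 1 ≤ i → i + 1 ≤ g - 1 → a i * a (i + 1) * a i = a (i + 1) * a i * a (i + 1))
    (hu1 : ∀ i j, 1 ≤ i → i + 2 ≤ j → j ≤ g - 1 → u i * u j = u j * u i)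
    (hu2 : ∀ i, 1 ≤ i → i + 1 ≤ g - 1 → u i * u (i + 1) * u i = u (i + 1) * u i * u (i + 1))
    (hC1 : ∀ i j, 1 ≤ i → i ≤ g - 1 → 1 ≤ j → j ≤ g - 1 → (i + 2 ≤ j ∨ j + 2 ≤ i) →
      a i * u j = u j * a i)
    (hC2 : ∀ i, 1 ≤ i → i ≤ g - 2 → a i * u (i + 1) * u i = u (i + 1) * u i * a (i + 1))
    (hC3 : ∀ i, 1 ≤ i → i ≤ g - 2 → a (i + 1) * u i * u (i + 1) = u i * u (i + 1) * a i)
    (hC4 : a 1 * u 1 * a 1 = u 1)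
    (hC5 : u 2 * a 1 * a 2 * u 1 = a 1 * a 2)
    :
    (prodAsc a (g - 1) * prodDesc u (g - 1)) ^ 2 = (braidDelta u g) ^ 2 := by
  by_cases hg : g = 0
  · subst hg
    simp [prodAsc_zero, prodDesc_zero, braidDelta_zero]
  · have hg1 : g - 1 + 1 = g := by omega
    have hL2 := deltaFact g u hu1 hu2 (g - 1) le_rfl
    rw [hg1] at hL2
    have hL1 := delta_rev g u hu1 (g - 1) le_rfl
    rw [hg1] at hL1
    have hpush := pushDelta g a u hu1 hu2 hC1 hC3 hC5 (g - 1) le_rfl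
    have hinv := invDelta g u hu1 (g - 1) (by omega)
    have hpush' : (braidDelta (fun i => u (i + 1)) (g - 1))⁻¹ * prodAsc a (g - 1)
        = prodAsc a (g - 1) * braidDelta u (g - 1) := by
      have h2 := inv_push hpush
      rw [hinv] at h2
      simpa using h2
    have hE1 := relE1 g a u hu1 hC1 hC2 hC3 hC4
    have hZ : prodDesc u (g - 1)
        = braidDelta u g * (braidDelta (fun i => u (i + 1)) (g - 1))⁻¹ := by
      rw [hL2]; group
    have hXZX : prodAsc a (g - 1) * prodDesc u (g - 1) * prodAsc a (g - 1)
        = braidDelta u g * braidDelta u (g - 1) := by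
      calc prodAsc a (g - 1) * prodDesc u (g - 1) * prodAsc a (g - 1)
          = prodAsc a (g - 1) * braidDelta u g *
              ((braidDelta (fun i => u (i + 1)) (g - 1))⁻¹ * prodAsc a (g - 1)) := by
            rw [hZ]; group
        _ = prodAsc a (g - 1) * braidDelta u g *
              (prodAsc a (g - 1) * braidDelta u (g - 1)) := by rw [hpush']
        _ = (prodAsc a (g - 1) * braidDelta u g * prodAsc a (g - 1)) *
              braidDelta u (g - 1) := by group
        _ = braidDelta u g * braidDelta u (g - 1) := by rw [hE1]
    calc (prodAsc a (g - 1) * prodDesc u (g - 1)) ^ 2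
        = (prodAsc a (g - 1) * prodDesc u (g - 1) * prodAsc a (g - 1)) *
            prodDesc u (g - 1) := by rw [pow_two]; group
      _ = (braidDelta u g * braidDelta u (g - 1)) * prodDesc u (g - 1) := by rw [hXZX]
      _ = braidDelta u g * (braidDelta u (g - 1) * prodDesc u (g - 1)) := by group
      _ = braidDelta u g * braidDelta u g := by rw [← hL1]
      _ = (braidDelta u g) ^ 2 := by rw [pow_two]
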